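/- Let v : [0, ∞) → [0, ∞) with v(r) = 0 for r > R₀, and let u₀ solve the zero-energy scattering equation -2μu₀'' + v·u₀ = 0 with u₀(0) = 0 and u₀(r) = r - a for r > R₀. Then for every R ≥ R₀: ∫₀^R { μ[u₀'(r) - u₀(r)/r]² + (1/2)v(r)u₀(r)² } dr = μ·a·(R - a)/R. -/

import Mathlib

open MeasureTheory intervalIntegral Set Filter Topology

theorem scattering_solution_integral (μ a R₀ R : ℝ) (hμ : 0 < μ) (hR₀ : 0 < R₀)
    (hR : R₀ ≤ R)
    (v u₀ u₀' u₀'' : ℝ → ℝ) (hv : Continuous v) (hvpos : ∀ r, 0 ≤ v r)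
    (hvsupp : ∀ r, R₀ < r → v r = 0)
    (hu : ∀ r, HasDerivAt u₀ (u₀' r) r) (hu' : ∀ r, HasDerivAt u₀' (u₀'' r) r)
    (hu''c : Continuous u₀'')
    (heq : ∀ r, -2 * μ * u₀'' r + v r * u₀ r = 0)
    (h0 : u₀ 0 = 0) (hasym : ∀ r, R₀ < r → u₀ r = r - a) :
    ∫ r in (0:ℝ)..R, (μ * (u₀' r - u₀ r / r) ^ 2 + (1 / 2) * v r * u₀ r ^ 2) =
      μ * a * (R - a) / R := by
  have hR0 : (0:ℝ) < R := lt_of_lt_of_le hR₀ hR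
  have hRne : R ≠ 0 := ne_of_gt hR0
  have huc : Continuous u₀ := continuous_iff_continuousAt.mpr fun x => (hu x).continuousAt
  have hu'c : Continuous u₀' := continuous_iff_continuousAt.mpr fun x => (hu' x).continuousAt
  -- derivative is 1 beyond R₀
  have hd1 : ∀ r, R₀ < r → u₀' r = 1 := by
    intro r hr
    have hev : u₀ =ᶠ[𝓝 r] fun s => s - a := by
      filter_upwards [Ioi_mem_nhds hr] with s hs using hasym s hs
    have h1 : HasDerivAt u₀ 1 r :=
      HasDerivAt.congr_of_eventuallyEq ((hasDerivAt_id r).sub_const a) hev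
    exact (hu r).unique h1
  -- values at R (including R = R₀ by continuity)
  have hu0R : u₀ R = R - a := by
    rcases lt_or_eq_of_le hR with h | h
    · exact hasym R h
    · rw [← h]
      have h1 : Tendsto u₀ (𝓝[>] R₀) (𝓝 (u₀ R₀)) := (huc.continuousAt).continuousWithinAt
      have h2 : Tendsto u₀ (𝓝[>] R₀) (𝓝 (R₀ - a)) := by
        have h3 : Tendsto (fun s : ℝ => s - a) (𝓝[>] R₀) (𝓝 (R₀ - a)) :=
          ((continuous_id.sub continuous_const).continuousAt).continuousWithinAt
        refine h3.congr' ?_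
        filter_upwards [self_mem_nhdsWithin] with s hs using (hasym s hs).symm
      exact tendsto_nhds_unique h1 h2
  have hu'R : u₀' R = 1 := by
    rcases lt_or_eq_of_le hR with h | h
    · exact hd1 R h
    · rw [← h]
      have h1 : Tendsto u₀' (𝓝[>] R₀) (𝓝 (u₀' R₀)) := (hu'c.continuousAt).continuousWithinAt
      have h2 : Tendsto u₀' (𝓝[>] R₀) (𝓝 1) := by
        have h3 : Tendsto (fun _ : ℝ => (1:ℝ)) (𝓝[>] R₀) (𝓝 1) := tendsto_const_nhds
        refine h3.congr' ?_
        filter_upwards [self_mem_nhdsWithin] with s hs using (hd1 s hs).symm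
      exact tendsto_nhds_unique h1 h2
  -- regularized quotient q
  set q : ℝ → ℝ := fun r => if r = 0 then u₀' 0 else u₀ r / r with hqdef
  have hq0 : q 0 = u₀' 0 := by simp [hqdef]
  have hqne : ∀ r : ℝ, r ≠ 0 → q r = u₀ r / r := by intro r hr; simp [hqdef, hr]
  have hqc : ContinuousOn q (Icc 0 R) := by
    intro x hx
    rcases eq_or_ne x 0 with rfl | hx0
    · rw [← continuousWithinAt_diff_self]
      have hslope := hasDerivAt_iff_tendsto_slope.mp (hu 0)
      have hq0' : Tendsto q (𝓝[≠] (0:ℝ)) (𝓝 (u₀' 0)) := by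
        refine hslope.congr' ?_
        filter_upwards [self_mem_nhdsWithin] with s hs
        have hs0 : s ≠ 0 := hs
        simp [slope_def_field, hqne s hs0, h0, div_eq_div_iff]
      have : Tendsto q (𝓝[Icc 0 R \ {0}] 0) (𝓝 (u₀' 0)) :=
        hq0'.mono_left (nhdsWithin_mono _ fun s hs => hs.2)
      simpa [ContinuousWithinAt, hq0] using this
    · have h1 : ContinuousAt (fun s => u₀ s / s) x :=
        (huc.continuousAt).div continuousAt_id hx0
      refine ContinuousAt.continuousWithinAt (h1.congr ?_)
      filter_upwards [eventually_ne_nhds hx0] with s hs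
      simp [hqne s hs]
  -- the potential term rewritten via the scattering equation
  have hveq : ∀ r, (1/2) * v r * u₀ r ^ 2 = μ * u₀'' r * u₀ r := by
    intro r
    have h2 : v r * u₀ r = 2 * μ * u₀'' r := by linarith [heq r]
    calc (1/2) * v r * u₀ r ^ 2 = (1/2) * (v r * u₀ r) * u₀ r := by ring
      _ = (1/2) * (2 * μ * u₀'' r) * u₀ r := by rw [h2]
      _ = μ * u₀'' r * u₀ r := by ring
  -- antiderivative F
  set F : ℝ → ℝ := fun r => μ * (u₀ r * u₀' r - u₀ r * q r) with hFdef
  have hFc : ContinuousOn F (Icc 0 R) :=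
    continuousOn_const.mul ((huc.continuousOn.mul hu'c.continuousOn).sub
      (huc.continuousOn.mul hqc))
  -- the continuous comparison integrand g
  set g : ℝ → ℝ := fun r => μ * (u₀' r - q r) ^ 2 + (1/2) * v r * u₀ r ^ 2 with hgdef
  have hgc : ContinuousOn g (Icc 0 R) :=
    (continuousOn_const.mul (((hu'c.continuousOn.sub hqc)).pow 2)).add
      ((continuousOn_const.mul hv.continuousOn).mul (huc.continuousOn.pow 2))
  have hgint : IntervalIntegrable g volume 0 R := by
    apply ContinuousOn.intervalIntegrable
    rwa [uIcc_of_le hR0.le]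
  -- the actual integrand agrees with g away from 0
  set f : ℝ → ℝ := fun r => μ * (u₀' r - u₀ r / r) ^ 2 + (1/2) * v r * u₀ r ^ 2 with hfdef
  have hfg : ∀ r : ℝ, r ≠ 0 → f r = g r := by
    intro r hr
    simp [hfdef, hgdef, hqne r hr]
  have hfint : IntervalIntegrable f volume 0 R := by
    refine hgint.congr_ae ?_
    refine ((ae_restrict_mem measurableSet_uIoc).mono ?_)
    intro r hr
    rw [uIoc_of_le hR0.le] at hr
    exact (hfg r (ne_of_gt hr.1)).symm
  -- F has derivative f on (0, R)
  have hFderiv : ∀ x ∈ Ioo (0:ℝ) R, HasDerivAt F (f x) x := by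
    intro x hx
    have hx0 : x ≠ 0 := ne_of_gt hx.1
    have h1 : HasDerivAt (fun s => u₀ s * u₀' s) (u₀' x * u₀' x + u₀ x * u₀'' x) x :=
      (hu x).mul (hu' x)
    have h2 : HasDerivAt (fun s => u₀ s ^ 2 / s)
        ((2 * u₀ x ^ 1 * u₀' x * x - u₀ x ^ 2 * 1) / x ^ 2) x := by
      have hpow : HasDerivAt (fun s => u₀ s ^ 2) ((2:ℕ) * u₀ x ^ 1 * u₀' x) x := by
        simpa using (hu x).fun_pow 2
      simpa using hpow.fun_div (hasDerivAt_id x) hx0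
    have h3 : HasDerivAt (fun s => μ * (u₀ s * u₀' s - u₀ s ^ 2 / s))
        (μ * ((u₀' x * u₀' x + u₀ x * u₀'' x)
          - (2 * u₀ x ^ 1 * u₀' x * x - u₀ x ^ 2 * 1) / x ^ 2)) x :=
      (h1.sub h2).const_mul μ
    have hFeq : F =ᶠ[𝓝 x] fun s => μ * (u₀ s * u₀' s - u₀ s ^ 2 / s) := by
      filter_upwards [eventually_ne_nhds hx0] with s hs
      simp [hFdef, hqne s hs, pow_two, mul_div_assoc]
    have hF : HasDerivAt F (μ * ((u₀' x * u₀' x + u₀ x * u₀'' x)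
          - (2 * u₀ x ^ 1 * u₀' x * x - u₀ x ^ 2 * 1) / x ^ 2)) x :=
      h3.congr_of_eventuallyEq hFeq
    have hval : f x = μ * ((u₀' x * u₀' x + u₀ x * u₀'' x)
          - (2 * u₀ x ^ 1 * u₀' x * x - u₀ x ^ 2 * 1) / x ^ 2) := by
      rw [hfdef]
      simp only
      rw [hveq x]
      field_simp
      ring
    rw [hval]
    exact hF
  -- FTC
  have hFTC : ∫ r in (0:ℝ)..R, f r = F R - F 0 :=
    integral_eq_sub_of_hasDeriv_right_of_le hR0.le hFc
      (fun x hx => (hFderiv x hx).hasDerivWithinAt) hfint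
  have hqR : q R = (R - a) / R := by rw [hqne R hRne, hu0R]
  have hF0 : F 0 = 0 := by simp [hFdef, h0]
  have hFR : F R = μ * a * (R - a) / R := by
    rw [hFdef]
    simp only
    rw [hu0R, hu'R, hqR]
    field_simp
    ring
  calc ∫ r in (0:ℝ)..R, (μ * (u₀' r - u₀ r / r) ^ 2 + (1 / 2) * v r * u₀ r ^ 2)
      = ∫ r in (0:ℝ)..R, f r := by rw [hfdef]
    _ = F R - F 0 := hFTC
    _ = μ * a * (R - a) / R := by rw [hF0, hFR, sub_zero]
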